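/- In an algebra satisfying (R1)-(R3) together with the first involution law r⁻⁻=r, the second involution law (r;s)⁻=s⁻;r⁻, and the distributive law for converse (r+s)⁻=r⁻+s⁻, the right-hand distributive law (r+s);t=r;t+s;t holds if and only if the left-hand distributive law r;(s+t)=r;s+r;t holds. -/
import Mathlib

/-- Under (R1)-(R3), (R6), (R7), and (R9), the right-hand distributive law (R8)
holds iff the left-hand distributive law (R8') holds. -/
theorem R8_iff_R8' {A : Type*} (add : A → A → A) (compl : A → A)
    (mul : A → A → A) (conv : A → A) (e : A)
    (R1 : ∀ r s, add r s = add s r)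
    (R2 : ∀ r s t, add r (add s t) = add (add r s) t)
    (R3 : ∀ r s, add (compl (add (compl r) s)) (compl (add (compl r) (compl s))) = r)
    (R6 : ∀ r, conv (conv r) = r)
    (R7 : ∀ r s, conv (mul r s) = mul (conv s) (conv r))
    (R9 : ∀ r s, conv (add r s) = add (conv r) (conv s)) :
    (∀ r s t, mul (add r s) t = add (mul r t) (mul s t)) ↔
      (∀ r s t, mul r (add s t) = add (mul r s) (mul r t)) := by
  constructor
  · intro h r s t
    calc mul r (add s t) = conv (conv (mul r (add s t))) := (R6 _).symm
      _ = conv (mul (conv (add s t)) (conv r)) := by rw [R7]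
      _ = conv (mul (add (conv s) (conv t)) (conv r)) := by rw [R9]
      _ = conv (add (mul (conv s) (conv r)) (mul (conv t) (conv r))) := by rw [h]
      _ = add (conv (mul (conv s) (conv r))) (conv (mul (conv t) (conv r))) := by rw [R9]
      _ = add (mul r s) (mul r t) := by rw [R7, R7, R6, R6, R6]
  · intro h r s t
    calc mul (add r s) t = conv (conv (mul (add r s) t)) := (R6 _).symm
      _ = conv (mul (conv t) (conv (add r s))) := by rw [R7]
      _ = conv (mul (conv t) (add (conv r) (conv s))) := by rw [R9]
      _ = conv (add (mul (conv t) (conv r)) (mul (conv t) (conv s))) := by rw [h]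
      _ = add (conv (mul (conv t) (conv r))) (conv (mul (conv t) (conv s))) := by rw [R9]
      _ = add (mul r t) (mul s t) := by rw [R7, R7, R6, R6, R6]
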